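/- Let M be a k×n matrix with entries in {0,1} that contains neither Δ1 = [[1,1],[0,1]] nor Δ2 = [[0,1],[1,1]] as a (not necessarily contiguous) 2×2 submatrix. Suppose rows i and j of M have at least one common column with entry 1 in both rows, and let L be the largest such column index. Then for every column index p ≤ L, M[i,p] = M[j,p]; in particular, the supports of rows i and j coincide on all columns up to and including L. -/
import Mathlib


/-- `M` contains `Δ₁ = [[1,1],[0,1]]` as a (not necessarily contiguous) 2×2 submatrix. -/
def HasDelta1 {k n : ℕ} (M : Fin k → Fin n → ℕ) : Prop :=
  ∃ (i j : Fin k) (k' l : Fin n), i < j ∧ k' < l ∧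
    M i k' = 1 ∧ M i l = 1 ∧ M j k' = 0 ∧ M j l = 1

/-- `M` contains `Δ₂ = [[0,1],[1,1]]` as a (not necessarily contiguous) 2×2 submatrix. -/
def HasDelta2 {k n : ℕ} (M : Fin k → Fin n → ℕ) : Prop :=
  ∃ (i j : Fin k) (k' l : Fin n), i < j ∧ k' < l ∧
    M i k' = 0 ∧ M i l = 1 ∧ M j k' = 1 ∧ M j l = 1

/-- In a 0-1 matrix avoiding `Δ₁` and `Δ₂`, if `L` is the largest column in
which rows `i` and `j` both have a `1`, then rows `i` and `j` agree in every column `p ≤ L`. -/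
theorem rows_agree_up_to_last_common_one
    {k n : ℕ} (M : Fin k → Fin n → ℕ) (h01 : ∀ i j, M i j = 0 ∨ M i j = 1)
    (hΔ1 : ¬ HasDelta1 M) (hΔ2 : ¬ HasDelta2 M)
    (i j : Fin k) (hij : i ≠ j) (L : Fin n)
    (hL : M i L = 1 ∧ M j L = 1)
    (hLmax : ∀ p : Fin n, M i p = 1 → M j p = 1 → p ≤ L) :
    ∀ p : Fin n, p ≤ L → M i p = M j p := by
  intro p hp
  rcases eq_or_lt_of_le hp with heq | hlt
  · rw [heq, hL.1, hL.2]
  · rcases h01 i p with hi | hi <;> rcases h01 j p with hj | hj <;>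
      try (rw [hi, hj])
    · exfalso
      rcases lt_or_gt_of_ne hij with hlt' | hlt'
      · exact hΔ2 ⟨i, j, p, L, hlt', hlt, hi, hL.1, hj, hL.2⟩
      · exact hΔ1 ⟨j, i, p, L, hlt', hlt, hj, hL.2, hi, hL.1⟩
    · exfalso
      rcases lt_or_gt_of_ne hij with hlt' | hlt'
      · exact hΔ1 ⟨i, j, p, L, hlt', hlt, hi, hL.1, hj, hL.2⟩
      · exact hΔ2 ⟨j, i, p, L, hlt', hlt, hj, hL.2, hi, hL.1⟩
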